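/- arXiv:cond-mat/0508737 — 2 statements merged into one kernel-verified Lean document; each statement's English description precedes it below -/
import Mathlib

section
/- Let X, Y : R → Fin 6 be rim colorings of the single-cell block B = {(0,0)} that differ at exactly one rim vertex. Then C_X and C_Y are nonempty, and there exists a coupling of the uniform distributions on C_X and C_Y whose expected Hamming distance is at most 0.50. -/
attribute [local instance] Classical.propDecidable

noncomputable section

/-- Grid adjacency on ℤ²: the ℓ¹-distance is 1. -/
def adjZ (u v : ℤ × ℤ) : Prop := (u.1 - v.1).natAbs + (u.2 - v.2).natAbs = 1

/-- The four grid neighbors of a point of ℤ². -/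
def nbrsZ (v : ℤ × ℤ) : Finset (ℤ × ℤ) :=
  {(v.1 + 1, v.2), (v.1 - 1, v.2), (v.1, v.2 + 1), (v.1, v.2 - 1)}

/-- The rim of a block B ⊆ ℤ²: the vertices outside B adjacent to some vertex of B. -/
def rimZ (B : Finset (ℤ × ℤ)) : Finset (ℤ × ℤ) := B.biUnion nbrsZ \ B

/-- The 6-colorings of the block B that are proper inside B and compatible with
the rim coloring X on the rim set R. -/
def CC (B R : Finset (ℤ × ℤ)) (X : ↥R → Fin 6) : Finset (↥B → Fin 6) :=
  Finset.univ.filter (fun c =>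
    (∀ u u' : ↥B, adjZ u.1 u'.1 → c u ≠ c u') ∧
    (∀ (u : ↥B) (v : ↥R), adjZ u.1 v.1 → c u ≠ X v))

/-- The Hamming distance between two colorings of the block B. -/
def hamming (B : Finset (ℤ × ℤ)) (c₁ c₂ : ↥B → Fin 6) : ℕ :=
  (Finset.univ.filter (fun u : ↥B => c₁ u ≠ c₂ u)).card

/-- μ is a coupling of the uniform distributions on the coloring sets of X and Y. -/
def IsCoupling (B R : Finset (ℤ × ℤ)) (X Y : ↥R → Fin 6)
    (μ : (↥B → Fin 6) → (↥B → Fin 6) → ℝ) : Prop :=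
  (∀ c₁ c₂, 0 ≤ μ c₁ c₂) ∧
  (∀ c₁ ∈ CC B R X, ∑ c₂ ∈ CC B R Y, μ c₁ c₂ = 1 / ((CC B R X).card : ℝ)) ∧
  (∀ c₂ ∈ CC B R Y, ∑ c₁ ∈ CC B R X, μ c₁ c₂ = 1 / ((CC B R Y).card : ℝ))

/-- The expected Hamming distance of a coupling μ. -/
def expHamming (B R : Finset (ℤ × ℤ)) (X Y : ↥R → Fin 6)
    (μ : (↥B → Fin 6) → (↥B → Fin 6) → ℝ) : ℝ :=
  ∑ c₁ ∈ CC B R X, ∑ c₂ ∈ CC B R Y, μ c₁ c₂ * (hamming B c₁ c₂ : ℝ)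

/-- The 1×1 block. -/
def B11 : Finset (ℤ × ℤ) := ({0} : Finset ℤ) ×ˢ ({0} : Finset ℤ)

/- ===== auxiliary lemmas ===== -/

lemma mem_B11 : ((0,0) : ℤ×ℤ) ∈ B11 := by simp [B11]

/-- The distinguished (only) element of the block. -/
def e0 : ↥B11 := ⟨(0,0), mem_B11⟩

lemma B11_eq (u : ↥B11) : u = e0 := by
  obtain ⟨p, hp⟩ := u
  simp only [B11, Finset.mem_product, Finset.mem_singleton] at hp
  exact Subtype.ext (Prod.ext hp.1 hp.2)

lemma rim_eq : rimZ B11 = ({(1,0),(-1,0),(0,1),(0,-1)} : Finset (ℤ×ℤ)) := by decide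

lemma not_adj00 : ¬ adjZ (0,0) (0,0) := by simp [adjZ]

lemma rim_adj : ∀ v ∈ rimZ B11, adjZ ((0,0):ℤ×ℤ) v := by
  rw [rim_eq]
  intro v hv
  simp only [Finset.mem_insert, Finset.mem_singleton] at hv
  rcases hv with h|h|h|h <;> subst h <;> simp [adjZ]

lemma card_rim : (rimZ B11).card = 4 := by rw [rim_eq]; decide

lemma mem_CC_iff (X : ↥(rimZ B11) → Fin 6) (c : ↥B11 → Fin 6) :
    c ∈ CC B11 (rimZ B11) X ↔ ∀ v, c e0 ≠ X v := by
  simp only [CC, Finset.mem_filter, Finset.mem_univ, true_and]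
  constructor
  · intro h v; exact h.2 e0 v (rim_adj v.1 v.2)
  · intro h
    refine ⟨?_, ?_⟩
    · intro u u' hadj
      rw [B11_eq u, B11_eq u'] at hadj
      exact absurd hadj not_adj00
    · intro u v _
      rw [B11_eq u]; exact h v

lemma hamming_self (c : ↥B11 → Fin 6) : hamming B11 c c = 0 := by
  simp [hamming]

lemma hamming_le_one (c₁ c₂ : ↥B11 → Fin 6) : hamming B11 c₁ c₂ ≤ 1 := by
  have h := Finset.card_filter_le (Finset.univ : Finset ↥B11)
    (fun u : ↥B11 => c₁ u ≠ c₂ u)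
  have h2 : (Finset.univ : Finset ↥B11).card = 1 := by
    rw [Finset.card_univ, Fintype.card_coe]
    decide
  exact h2 ▸ h

/- STATEMENT 12 -/
set_option maxHeartbeats 1000000 in
theorem coupling_block_12 (X Y : ↥(rimZ B11) → Fin 6)
    (hXY : ∃ v₀, X v₀ ≠ Y v₀ ∧ ∀ u, u ≠ v₀ → X u = Y u) :
    (CC B11 (rimZ B11) X).Nonempty ∧ (CC B11 (rimZ B11) Y).Nonempty ∧
    ∃ μ : (↥B11 → Fin 6) → (↥B11 → Fin 6) → ℝ,
      IsCoupling B11 (rimZ B11) X Y μ ∧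
      expHamming B11 (rimZ B11) X Y μ ≤ 0.50 := by
  obtain ⟨v₀, hne, heq⟩ := hXY
  set A := CC B11 (rimZ B11) X with hA
  set Bb := CC B11 (rimZ B11) Y with hB
  set I := A ∩ Bb with hIdef
  have hIA : I ⊆ A := Finset.inter_subset_left
  have hIB : I ⊆ Bb := Finset.inter_subset_right
  -- a color avoiding both ranges
  have hcard_univ : Fintype.card ↥(rimZ B11) = 4 := by
    rw [Fintype.card_coe, card_rim]
  obtain ⟨k0, hk0⟩ : ∃ k : Fin 6,
      k ∉ (Finset.univ.image X ∪ Finset.univ.image Y) := by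
    by_contra h
    push_neg at h
    have hsub : (Finset.univ : Finset (Fin 6)) ⊆
        Finset.univ.image X ∪ Finset.univ.image Y := fun k _ => h k
    have h1 : (Finset.univ.image X ∪ Finset.univ.image Y) ⊆
        insert (Y v₀) (Finset.univ.image X) := by
      intro k hk
      rcases Finset.mem_union.mp hk with hk | hk
      · exact Finset.mem_insert_of_mem hk
      · obtain ⟨v, -, rfl⟩ := Finset.mem_image.mp hk
        by_cases hv : v = v₀
        · subst hv; exact Finset.mem_insert_self _ _
        · exact Finset.mem_insert_of_mem
            (Finset.mem_image.mpr ⟨v, Finset.mem_univ v, heq v hv⟩)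
    have h2 := (Finset.card_le_card (hsub.trans h1)).trans
      ((Finset.card_insert_le _ _).trans
        (Nat.add_le_add_right (Finset.card_image_le.trans
          (le_of_eq (by rw [Finset.card_univ, hcard_univ]))) 1))
    simp at h2
  have hk0X : ∀ v, k0 ≠ X v := by
    intro v h
    exact hk0 (Finset.mem_union_left _
      (Finset.mem_image.mpr ⟨v, Finset.mem_univ v, h.symm⟩))
  have hk0Y : ∀ v, k0 ≠ Y v := by
    intro v h
    exact hk0 (Finset.mem_union_right _
      (Finset.mem_image.mpr ⟨v, Finset.mem_univ v, h.symm⟩))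
  have hI0 : (fun _ => k0 : ↥B11 → Fin 6) ∈ I := by
    refine Finset.mem_inter.mpr ⟨?_, ?_⟩
    · exact (mem_CC_iff X _).mpr (fun v => hk0X v)
    · exact (mem_CC_iff Y _).mpr (fun v => hk0Y v)
  have hAne : A.Nonempty := ⟨_, hIA hI0⟩
  have hBne : Bb.Nonempty := ⟨_, hIB hI0⟩
  refine ⟨hAne, hBne, ?_⟩
  -- structure lemmas
  have hAsub : A ⊆ insert (fun _ => Y v₀) I := by
    intro c hc
    by_cases hcB : c ∈ Bb
    · exact Finset.mem_insert_of_mem (Finset.mem_inter.mpr ⟨hc, hcB⟩)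
    · have hX := (mem_CC_iff X c).mp hc
      have : ¬ ∀ v, c e0 ≠ Y v := fun h => hcB ((mem_CC_iff Y c).mpr h)
      push_neg at this
      obtain ⟨v, hv⟩ := this
      have hvv : v = v₀ := by
        by_contra hvne
        exact hX v (by rw [heq v hvne]; exact hv)
      subst hvv
      have hceq : c = (fun _ => Y v) := by
        funext u; rw [B11_eq u]; exact hv
      rw [hceq]; exact Finset.mem_insert_self _ _
  have hBsub : Bb ⊆ insert (fun _ => X v₀) I := by
    intro c hc
    by_cases hcA : c ∈ A
    · exact Finset.mem_insert_of_mem (Finset.mem_inter.mpr ⟨hcA, hc⟩)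
    · have hY := (mem_CC_iff Y c).mp hc
      have : ¬ ∀ v, c e0 ≠ X v := fun h => hcA ((mem_CC_iff X c).mpr h)
      push_neg at this
      obtain ⟨v, hv⟩ := this
      have hvv : v = v₀ := by
        by_contra hvne
        exact hY v (by rw [← heq v hvne]; exact hv)
      subst hvv
      have hceq : c = (fun _ => X v) := by
        funext u; rw [B11_eq u]; exact hv
      rw [hceq]; exact Finset.mem_insert_self _ _
  -- cardinalities
  have hi1 : 1 ≤ I.card := Finset.card_pos.mpr ⟨_, hI0⟩
  have hia : I.card ≤ A.card := Finset.card_le_card hIA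
  have hib : I.card ≤ Bb.card := Finset.card_le_card hIB
  have hai : A.card ≤ I.card + 1 :=
    (Finset.card_le_card hAsub).trans (Finset.card_insert_le _ _)
  have hbi : Bb.card ≤ I.card + 1 :=
    (Finset.card_le_card hBsub).trans (Finset.card_insert_le _ _)
  -- real constants
  have ha0 : (0:ℝ) < (A.card : ℝ) := by
    exact_mod_cast Nat.lt_of_lt_of_le Nat.zero_lt_one (hi1.trans hia)
  have hb0 : (0:ℝ) < (Bb.card : ℝ) := by
    exact_mod_cast Nat.lt_of_lt_of_le Nat.zero_lt_one (hi1.trans hib)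
  set m : ℝ := min (1/(A.card:ℝ)) (1/(Bb.card:ℝ)) with hmdef
  have hm_pos : 0 < m := lt_min (by positivity) (by positivity)
  have hmA : m ≤ 1/(A.card:ℝ) := min_le_left _ _
  have hmB : m ≤ 1/(Bb.card:ℝ) := min_le_right _ _
  have hip1 : (0:ℝ) < (I.card:ℝ) + 1 := by positivity
  have hmlow : 1/((I.card:ℝ)+1) ≤ m := by
    refine le_min ?_ ?_
    · apply one_div_le_one_div_of_le ha0
      exact_mod_cast hai
    · apply one_div_le_one_div_of_le hb0
      exact_mod_cast hbi
  set Z : ℝ := 1 - (I.card:ℝ) * m with hZdef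
  have hZ0 : 0 ≤ Z := by
    have h1 : (I.card:ℝ) * m ≤ (A.card:ℝ) * (1/(A.card:ℝ)) := by
      apply mul_le_mul (by exact_mod_cast hia) hmA (le_of_lt hm_pos) (le_of_lt ha0)
    rw [mul_one_div, div_self ha0.ne'] at h1
    simp only [hZdef]; linarith
  have hZhalf : Z ≤ 1/2 := by
    have h1 : (I.card:ℝ) * (1/((I.card:ℝ)+1)) ≤ (I.card:ℝ) * m :=
      mul_le_mul_of_nonneg_left hmlow (by positivity)
    have h2 : (I.card:ℝ) * (1/((I.card:ℝ)+1)) = 1 - 1/((I.card:ℝ)+1) := by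
      field_simp
      ring
    have h3 : 1/((I.card:ℝ)+1) ≤ 1/2 := by
      apply one_div_le_one_div_of_le (by norm_num)
      have : (1:ℝ) ≤ (I.card:ℝ) := by exact_mod_cast hi1
      linarith
    simp only [hZdef]; linarith
  -- indicator sums
  have hsum_indA : ∑ c ∈ A, (if c ∈ I then m else 0) = (I.card:ℝ) * m := by
    rw [Finset.sum_ite_mem, Finset.inter_eq_right.mpr hIA, Finset.sum_const,
      nsmul_eq_mul]
  have hsum_indB : ∑ c ∈ Bb, (if c ∈ I then m else 0) = (I.card:ℝ) * m := by
    rw [Finset.sum_ite_mem, Finset.inter_eq_right.mpr hIB, Finset.sum_const,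
      nsmul_eq_mul]
  by_cases hZzero : Z = 0
  -- degenerate case: A = I = Bb
  · have hone : (I.card:ℝ) * m = 1 := by
      simp only [hZdef] at hZzero; linarith
    have haI : A.card ≤ I.card := by
      have h1 : (I.card:ℝ) * m ≤ (I.card:ℝ) * (1/(A.card:ℝ)) :=
        mul_le_mul_of_nonneg_left hmA (by positivity)
      rw [hone, mul_one_div] at h1
      have := (one_le_div ha0).mp h1
      exact_mod_cast this
    have hbI : Bb.card ≤ I.card := by
      have h1 : (I.card:ℝ) * m ≤ (I.card:ℝ) * (1/(Bb.card:ℝ)) :=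
        mul_le_mul_of_nonneg_left hmB (by positivity)
      rw [hone, mul_one_div] at h1
      have := (one_le_div hb0).mp h1
      exact_mod_cast this
    have hIAeq : I = A := Finset.eq_of_subset_of_card_le hIA haI
    have hIBeq : I = Bb := Finset.eq_of_subset_of_card_le hIB hbI
    have hABeq : A = Bb := hIAeq ▸ hIBeq
    refine ⟨fun c₁ c₂ => if c₁ = c₂ then 1/(A.card:ℝ) else 0, ⟨?_, ?_, ?_⟩, ?_⟩
    · intro c₁ c₂
      show (0:ℝ) ≤ ite (c₁ = c₂) (1/(A.card:ℝ)) 0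
      split
      · exact le_of_lt (one_div_pos.mpr ha0)
      · exact le_refl 0
    · simp only [← hA, ← hB]
      intro c₁ hc₁
      rw [Finset.sum_ite_eq, if_pos (show c₁ ∈ Bb by rw [← hABeq]; exact hc₁)]
    · simp only [← hA, ← hB]
      intro c₂ hc₂
      rw [Finset.sum_ite_eq', if_pos (show c₂ ∈ A by rw [hABeq]; exact hc₂), hABeq]
    · have : expHamming B11 (rimZ B11) X Y
          (fun c₁ c₂ => if c₁ = c₂ then 1/(A.card:ℝ) else 0) = 0 := by
        unfold expHamming
        apply Finset.sum_eq_zero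
        intro c₁ _
        apply Finset.sum_eq_zero
        intro c₂ _
        by_cases h : c₁ = c₂
        · subst h; simp [hamming_self]
        · simp [h]
      rw [this]; norm_num
  -- main case: Z > 0
  · have hZpos : 0 < Z := lt_of_le_of_ne hZ0 (Ne.symm hZzero)
    set p : (↥B11 → Fin 6) → ℝ :=
      fun c => 1/(A.card:ℝ) - (if c ∈ I then m else 0) with hpdef
    set q : (↥B11 → Fin 6) → ℝ :=
      fun c => 1/(Bb.card:ℝ) - (if c ∈ I then m else 0) with hqdef
    have hp_nonneg : ∀ c, 0 ≤ p c := by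
      intro c; simp only [hpdef]; split
      · linarith
      · rw [sub_zero]; exact le_of_lt (one_div_pos.mpr ha0)
    have hq_nonneg : ∀ c, 0 ≤ q c := by
      intro c; simp only [hqdef]; split
      · linarith
      · rw [sub_zero]; exact le_of_lt (one_div_pos.mpr hb0)
    have hsum_p : ∑ c ∈ A, p c = Z := by
      simp only [hpdef]
      rw [Finset.sum_sub_distrib, hsum_indA, Finset.sum_const, nsmul_eq_mul,
        mul_one_div, div_self ha0.ne']
    have hsum_q : ∑ c ∈ Bb, q c = Z := by
      simp only [hqdef]
      rw [Finset.sum_sub_distrib, hsum_indB, Finset.sum_const, nsmul_eq_mul,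
        mul_one_div, div_self hb0.ne']
    set μ : (↥B11 → Fin 6) → (↥B11 → Fin 6) → ℝ :=
      fun c₁ c₂ => (if c₁ = c₂ ∧ c₁ ∈ I then m else 0) + p c₁ * q c₂ / Z
      with hμdef
    have hrow2 : ∀ c₁, ∑ c₂ ∈ Bb, p c₁ * q c₂ / Z = p c₁ := by
      intro c₁
      have : ∀ x, p c₁ * q x / Z = p c₁ / Z * q x := fun x => by ring
      simp_rw [this]
      rw [← Finset.mul_sum, hsum_q, div_mul_cancel₀ _ hZzero]
    have hcol2 : ∀ c₂, ∑ c₁ ∈ A, p c₁ * q c₂ / Z = q c₂ := by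
      intro c₂
      have : ∀ x, p x * q c₂ / Z = q c₂ / Z * p x := fun x => by ring
      simp_rw [this]
      rw [← Finset.mul_sum, hsum_p, div_mul_cancel₀ _ hZzero]
    refine ⟨μ, ⟨?_, ?_, ?_⟩, ?_⟩
    · intro c₁ c₂
      apply add_nonneg
      · split
        · exact le_of_lt hm_pos
        · exact le_refl 0
      · exact div_nonneg (mul_nonneg (hp_nonneg c₁) (hq_nonneg c₂)) (le_of_lt hZpos)
    · simp only [← hA, ← hB]
      intro c₁ hc₁
      simp only [hμdef]
      rw [Finset.sum_add_distrib, hrow2]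
      have hdiag : ∑ c₂ ∈ Bb, (if c₁ = c₂ ∧ c₁ ∈ I then m else 0)
          = (if c₁ ∈ I then m else 0) := by
        by_cases hc : c₁ ∈ I
        · simp only [hc, and_true, if_pos]
          rw [Finset.sum_ite_eq, if_pos (hIB hc)]
        · simp [hc]
      rw [hdiag]
      simp only [hpdef]
      by_cases hc : c₁ ∈ I <;> simp [hc]
    · simp only [← hA, ← hB]
      intro c₂ hc₂
      simp only [hμdef]
      rw [Finset.sum_add_distrib, hcol2]
      have hdiag : ∑ c₁ ∈ A, (if c₁ = c₂ ∧ c₁ ∈ I then m else 0)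
          = (if c₂ ∈ I then m else 0) := by
        simp_rw [ite_and]
        rw [Finset.sum_ite_eq']
        by_cases hc : c₂ ∈ I
        · rw [if_pos (hIA hc), if_pos hc]
        · rw [if_neg hc]
          split <;> rfl
      rw [hdiag]
      simp only [hqdef]
      by_cases hc : c₂ ∈ I <;> simp [hc]
    · have hbound : expHamming B11 (rimZ B11) X Y μ
          ≤ ∑ c₁ ∈ A, ∑ c₂ ∈ Bb, p c₁ * q c₂ / Z := by
        unfold expHamming
        apply Finset.sum_le_sum
        intro c₁ _
        apply Finset.sum_le_sum
        intro c₂ _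
        simp only [hμdef]
        by_cases h : c₁ = c₂
        · subst h
          rw [hamming_self]
          simp only [Nat.cast_zero, mul_zero]
          exact div_nonneg (mul_nonneg (hp_nonneg c₁) (hq_nonneg c₁)) (le_of_lt hZpos)
        · rw [if_neg (fun hh => h hh.1), zero_add]
          have hham : ((hamming B11 c₁ c₂ : ℕ) : ℝ) ≤ 1 := by
            exact_mod_cast hamming_le_one c₁ c₂
          have hnn : 0 ≤ p c₁ * q c₂ / Z :=
            div_nonneg (mul_nonneg (hp_nonneg c₁) (hq_nonneg c₂)) (le_of_lt hZpos)
          calc p c₁ * q c₂ / Z * (hamming B11 c₁ c₂ : ℝ)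
              ≤ p c₁ * q c₂ / Z * 1 := mul_le_mul_of_nonneg_left hham hnn
            _ = p c₁ * q c₂ / Z := mul_one _
      have hsum : ∑ c₁ ∈ A, ∑ c₂ ∈ Bb, p c₁ * q c₂ / Z = Z := by
        simp_rw [hrow2]
        exact hsum_p
      rw [hsum] at hbound
      have : (0.50 : ℝ) = 1/2 := by norm_num
      rw [this]
      exact hbound.trans hZhalf
end
end

section
/- Let G be a finite simple graph with maximum degree at most Δ and let q ≥ Δ + 2. Let x and y be proper q-colorings of G and let D = {v : x(v) ≠ y(v)} have cardinality m. Then there exists a sequence of proper q-colorings x = z₀, z₁, …, z_k = y with k ≤ m·(Δ + 1) such that for each 0 ≤ i < k, the colorings z_i and z_{i+1} differ at exactly one vertex, and every z_i agrees with x (equivalently with y) on all vertices outside D. -/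
/- STATEMENT 16: For q ≥ Δ + 2, any two proper q-colorings x, y differing on a
set D of m vertices are connected by a sequence of at most m(Δ+1) single-vertex
(Glauber) moves through proper colorings agreeing with x and y outside D. -/

attribute [local instance] Classical.propDecidable

section Aux

variable {V : Type} [Fintype V] (G : SimpleGraph V) (Δ q : ℕ) [DecidableRel G.Adj]

lemma exists_free_color (hΔ : ∀ v, G.degree v ≤ Δ) (hq : Δ + 2 ≤ q)
    (x : V → Fin q) (u : V) (a : Fin q) :
    ∃ c : Fin q, c ≠ a ∧ ∀ w, G.Adj u w → c ≠ x w := by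
  classical
  set bad : Finset (Fin q) := insert a ((G.neighborFinset u).image x) with hbad
  have hcard : bad.card ≤ Δ + 1 := by
    have h1 : bad.card ≤ ((G.neighborFinset u).image x).card + 1 :=
      Finset.card_insert_le _ _
    have h2 : ((G.neighborFinset u).image x).card ≤ (G.neighborFinset u).card :=
      Finset.card_image_le
    have h3 : (G.neighborFinset u).card = G.degree u := rfl
    have h4 := hΔ u
    omega
  have hex : ∃ c : Fin q, c ∉ bad := by
    by_contra h
    push_neg at h
    have h2 : (Finset.univ : Finset (Fin q)) ⊆ bad := fun c _ => h c
    have h3 := Finset.card_le_card h2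
    rw [Finset.card_univ, Fintype.card_fin] at h3
    omega
  obtain ⟨c, hc⟩ := hex
  refine ⟨c, ?_, ?_⟩
  · intro h; exact hc (by rw [hbad, h]; exact Finset.mem_insert_self _ _)
  · intro w hw h
    apply hc
    rw [hbad]
    exact Finset.mem_insert_of_mem (h ▸ Finset.mem_image_of_mem x
      ((SimpleGraph.mem_neighborFinset G u w).mpr hw))

lemma single_step (hΔ : ∀ v, G.degree v ≤ Δ) (hq : Δ + 2 ≤ q)
    (y : V → Fin q) (v : V) (x : V → Fin q)
    (hxp : ∀ a b, G.Adj a b → x a ≠ x b) (hxv : x v ≠ y v)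
    (hS : ∀ u, G.Adj v u → x u ≠ y v) :
    ∃ z : ℕ → V → Fin q,
      z 0 = x ∧
      (∀ i ≤ 1, ∀ a b, G.Adj a b → z i a ≠ z i b) ∧
      (∀ i < 1, ∃! w, z i w ≠ z (i + 1) w) ∧
      (∀ i ≤ 1, ∀ w, x w = y w → z i w = x w) ∧
      z 1 v = y v := by
  classical
  set x' : V → Fin q := Function.update x v (y v) with hx'
  set z : ℕ → V → Fin q := fun i => if i = 0 then x else x' with hz
  have hz0 : z 0 = x := rfl
  have hz1 : z 1 = x' := rfl
  have hx'p : ∀ a b, G.Adj a b → x' a ≠ x' b := by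
    intro a b hab
    by_cases ha : a = v
    · rw [ha] at hab ⊢
      by_cases hb : b = v
      · rw [hb] at hab; exact absurd hab G.irrefl
      · rw [hx', Function.update_self, Function.update_of_ne hb]
        exact fun h => hS b hab h.symm
    · by_cases hb : b = v
      · rw [hb] at hab ⊢
        rw [hx', Function.update_self, Function.update_of_ne ha]
        exact hS a hab.symm
      · rw [hx', Function.update_of_ne ha, Function.update_of_ne hb]
        exact hxp a b hab
  refine ⟨z, hz0, ?_, ?_, ?_, ?_⟩
  · intro i hi a b hab
    by_cases h0 : i = 0
    · subst h0; exact hxp a b hab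
    · have : z i = x' := by simp [hz, h0]
      rw [this]; exact hx'p a b hab
  · intro i hi
    have h0 : i = 0 := by omega
    subst h0
    have e0 : ∀ w, z 0 w = x w := fun w => rfl
    have e1 : ∀ w, z (0 + 1) w = x' w := fun w => rfl
    refine ⟨v, ?_, ?_⟩
    · show z 0 v ≠ z (0 + 1) v
      rw [e0, e1, hx', Function.update_self]; exact hxv
    · intro w hw
      have hw' : z 0 w ≠ z (0 + 1) w := hw
      by_contra hwv
      rw [e0, e1, hx', Function.update_of_ne hwv] at hw'
      exact hw' rfl
  · intro i hi w hw
    by_cases h0 : i = 0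
    · subst h0; rw [hz0]
    · have : z i = x' := by simp [hz, h0]
      rw [this, hx', Function.update_of_ne (fun h : w = v => hxv (h ▸ hw ▸ rfl))]
  · rw [hz1, hx', Function.update_self]

lemma fix_vertex (hΔ : ∀ v, G.degree v ≤ Δ) (hq : Δ + 2 ≤ q)
    (y : V → Fin q) (hy : ∀ u v, G.Adj u v → y u ≠ y v) (v : V) :
    ∀ s : ℕ, ∀ x : V → Fin q, (∀ a b, G.Adj a b → x a ≠ x b) → x v ≠ y v →
    (Finset.univ.filter (fun u => G.Adj v u ∧ x u = y v)).card ≤ s →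
    ∃ k, k ≤ s + 1 ∧ ∃ z : ℕ → V → Fin q,
      z 0 = x ∧
      (∀ i ≤ k, ∀ a b, G.Adj a b → z i a ≠ z i b) ∧
      (∀ i < k, ∃! w, z i w ≠ z (i + 1) w) ∧
      (∀ i ≤ k, ∀ w, x w = y w → z i w = x w) ∧
      z k v = y v := by
  classical
  intro s
  induction s with
  | zero =>
    intro x hxp hxv hcard
    have hS : ∀ u, G.Adj v u → x u ≠ y v := by
      intro u hu he
      have : u ∈ Finset.univ.filter (fun u => G.Adj v u ∧ x u = y v) := by
        simp [hu, he]
      have h0 : (Finset.univ.filter (fun u => G.Adj v u ∧ x u = y v)).card = 0 := by omega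
      rw [Finset.card_eq_zero] at h0
      simp [h0] at this
    obtain ⟨z, h1, h2, h3, h4, h5⟩ := single_step G Δ q hΔ hq y v x hxp hxv hS
    exact ⟨1, le_refl _, z, h1, h2, h3, h4, h5⟩
  | succ s IH =>
    intro x hxp hxv hcard
    by_cases hS : ∀ u, G.Adj v u → x u ≠ y v
    · obtain ⟨z, h1, h2, h3, h4, h5⟩ := single_step G Δ q hΔ hq y v x hxp hxv hS
      exact ⟨1, by omega, z, h1, h2, h3, h4, h5⟩
    · push_neg at hS
      obtain ⟨u, huv, hxu⟩ := hS
      have hune : u ≠ v := by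
        intro h; subst h; exact G.irrefl huv
      obtain ⟨c, hca, hcw⟩ := exists_free_color G Δ q hΔ hq x u (y v)
      set x' : V → Fin q := Function.update x u c with hx'def
      have hx'u : x' u = c := by rw [hx'def, Function.update_self]
      have hx'w : ∀ w, w ≠ u → x' w = x w := by
        intro w hwu; rw [hx'def, Function.update_of_ne hwu]
      have hx'p : ∀ a b, G.Adj a b → x' a ≠ x' b := by
        intro a b hab
        by_cases ha : a = u
        · rw [ha] at hab ⊢
          have hb : b ≠ u := fun h => G.irrefl (v := u) (h ▸ hab)
          rw [hx'u, hx'w b hb]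
          exact hcw b hab
        · by_cases hb : b = u
          · rw [hb] at hab ⊢
            rw [hx'u, hx'w a ha]
            exact fun h => hcw a hab.symm h.symm
          · rw [hx'w a ha, hx'w b hb]; exact hxp a b hab
      have hx'v : x' v ≠ y v := by rw [hx'w v hune.symm]; exact hxv
      have hcard' : (Finset.univ.filter (fun w => G.Adj v w ∧ x' w = y v)).card ≤ s := by
        have hsub : Finset.univ.filter (fun w => G.Adj v w ∧ x' w = y v) ⊆
            (Finset.univ.filter (fun w => G.Adj v w ∧ x w = y v)).erase u := by
          intro w hw
          simp only [Finset.mem_filter, Finset.mem_univ, true_and] at hw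
          have hwu : w ≠ u := by
            intro h; subst h
            rw [hx'u] at hw
            exact hca hw.2
          rw [Finset.mem_erase]
          refine ⟨hwu, ?_⟩
          simp only [Finset.mem_filter, Finset.mem_univ, true_and]
          exact ⟨hw.1, (hx'w w hwu) ▸ hw.2⟩
        have humem : u ∈ Finset.univ.filter (fun w => G.Adj v w ∧ x w = y v) := by
          simp [huv, hxu]
        have h1 := Finset.card_le_card hsub
        rw [Finset.card_erase_of_mem humem] at h1
        omega
      obtain ⟨k', hk', z', hz0, hzp, hzu, hza, hzv⟩ := IH x' hx'p hx'v hcard'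
      set z : ℕ → V → Fin q := fun i => if i = 0 then x else z' (i - 1) with hzdef
      have hzi : ∀ i, i ≠ 0 → z i = z' (i - 1) := by
        intro i hi; simp [hzdef, hi]
      refine ⟨k' + 1, by omega, z, rfl, ?_, ?_, ?_, ?_⟩
      · intro i hi a b hab
        by_cases h0 : i = 0
        · subst h0; exact hxp a b hab
        · rw [hzi i h0]; exact hzp (i - 1) (by omega) a b hab
      · intro i hi
        by_cases h0 : i = 0
        · subst h0
          have e2 : z 1 = x' := by rw [hzi 1 one_ne_zero]; exact hz0
          have e0' : ∀ w, z 0 w = x w := fun w => rfl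
          have e1' : ∀ w, z (0 + 1) w = x' w := fun w => by
            show z 1 w = x' w
            rw [e2]
          refine ⟨u, ?_, ?_⟩
          · show z 0 u ≠ z (0 + 1) u
            rw [e0', e1', hx'u]
            intro h
            exact hca (h ▸ hxu)
          · intro w hw
            have hw' : z 0 w ≠ z (0 + 1) w := hw
            by_contra hwu
            rw [e0', e1', hx'w w hwu] at hw'
            exact hw' rfl
        · have e1 : z i = z' (i - 1) := hzi i h0
          have e2 : z (i + 1) = z' ((i - 1) + 1) := by
            have h11 : i - 1 + 1 = i + 1 - 1 := by omega
            rw [hzi (i + 1) (by omega), h11]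
          rw [e1, e2]
          exact hzu (i - 1) (by omega)
      · intro i hi w hw
        have hwu : w ≠ u := by
          intro h; subst h
          exact hy v w huv (hxu ▸ hw ▸ rfl)
        by_cases h0 : i = 0
        · subst h0; rfl
        · rw [hzi i h0]
          have := hza (i - 1) (by omega) w (by rw [hx'w w hwu]; exact hw)
          rw [this, hx'w w hwu]
      · rw [hzi (k' + 1) (by omega)]
        simpa using hzv


lemma glauber_main (hΔ : ∀ v, G.degree v ≤ Δ) (hq : Δ + 2 ≤ q)
    (y : V → Fin q) (hy : ∀ u v, G.Adj u v → y u ≠ y v) :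
    ∀ m : ℕ, ∀ x : V → Fin q, (∀ a b, G.Adj a b → x a ≠ x b) →
    (Finset.univ.filter (fun w => x w ≠ y w)).card = m →
    ∃ (k : ℕ) (z : ℕ → V → Fin q),
      z 0 = x ∧ z k = y ∧
      k ≤ m * (Δ + 1) ∧
      (∀ i ≤ k, ∀ a b, G.Adj a b → z i a ≠ z i b) ∧
      (∀ i < k, ∃! w, z i w ≠ z (i + 1) w) ∧
      (∀ i ≤ k, ∀ w, x w = y w → z i w = x w) := by
  classical
  intro m
  induction m using Nat.strong_induction_on with
  | _ m IH =>
    intro x hxp hm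
    by_cases hD : ∀ w, x w = y w
    · refine ⟨0, fun _ => x, rfl, funext hD, Nat.zero_le _, ?_, ?_, ?_⟩
      · intro i _ a b hab; exact hxp a b hab
      · intro i hi; exact absurd hi (Nat.not_lt_zero i)
      · intro i _ w _; rfl
    · push_neg at hD
      obtain ⟨v, hv⟩ := hD
      have hScard : (Finset.univ.filter (fun u => G.Adj v u ∧ x u = y v)).card ≤ Δ := by
        have hsub : Finset.univ.filter (fun u => G.Adj v u ∧ x u = y v) ⊆
            G.neighborFinset v := by
          intro w hw
          simp only [Finset.mem_filter, Finset.mem_univ, true_and] at hw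
          exact (SimpleGraph.mem_neighborFinset G v w).mpr hw.1
        have h1 := Finset.card_le_card hsub
        have h2 : (G.neighborFinset v).card = G.degree v := rfl
        have h3 := hΔ v
        omega
      obtain ⟨k₁, hk₁, seg, hseg0, hsegp, hsegu, hsega, hsegv⟩ :=
        fix_vertex G Δ q hΔ hq y hy v Δ x hxp hv hScard
      set x₁ : V → Fin q := seg k₁ with hx₁
      have hx₁p : ∀ a b, G.Adj a b → x₁ a ≠ x₁ b := hsegp k₁ le_rfl
      have hx₁a : ∀ w, x w = y w → x₁ w = x w := fun w hw => hsega k₁ le_rfl w hw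
      have hmem_v : v ∈ Finset.univ.filter (fun w => x w ≠ y w) := by simp [hv]
      have hm1sub : Finset.univ.filter (fun w => x₁ w ≠ y w) ⊆
          (Finset.univ.filter (fun w => x w ≠ y w)).erase v := by
        intro w hw
        simp only [Finset.mem_filter, Finset.mem_univ, true_and] at hw
        rw [Finset.mem_erase]
        constructor
        · intro h; exact hw (by rw [h]; exact hsegv)
        · simp only [Finset.mem_filter, Finset.mem_univ, true_and]
          intro h
          exact hw (by rw [hx₁a w h, h])
      set m₁ : ℕ := (Finset.univ.filter (fun w => x₁ w ≠ y w)).card with hm₁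
      have hmpos : 0 < m := by
        rw [← hm]
        exact Finset.card_pos.mpr ⟨v, hmem_v⟩
      have hm₁lt : m₁ < m := by
        have h1 := Finset.card_le_card hm1sub
        rw [Finset.card_erase_of_mem hmem_v, hm] at h1
        omega
      obtain ⟨k₂, z', hz'0, hz'k, hk₂, hz'p, hz'u, hz'a⟩ := IH m₁ hm₁lt x₁ hx₁p rfl
      set z : ℕ → V → Fin q := fun i => if i ≤ k₁ then seg i else z' (i - k₁) with hzdef
      have hz_lo : ∀ i, i ≤ k₁ → z i = seg i := by
        intro i hi; simp [hzdef, hi]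
      have hz_hi : ∀ i, k₁ ≤ i → z i = z' (i - k₁) := by
        intro i hi
        by_cases h : i ≤ k₁
        · have hik : i = k₁ := le_antisymm h hi
          rw [hz_lo i h, hik, Nat.sub_self, hz'0]
        · simp [hzdef, h]
      refine ⟨k₁ + k₂, z, ?_, ?_, ?_, ?_, ?_, ?_⟩
      · rw [hz_lo 0 (Nat.zero_le _)]; exact hseg0
      · rw [hz_hi (k₁ + k₂) (Nat.le_add_right _ _), Nat.add_sub_cancel_left]
        exact hz'k
      · have h2 : m₁ ≤ m - 1 := by omega
        have h3 : k₂ ≤ (m - 1) * (Δ + 1) :=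
          le_trans hk₂ (Nat.mul_le_mul_right _ h2)
        have h4 : (Δ + 1) + (m - 1) * (Δ + 1) = m * (Δ + 1) := by
          cases m with
          | zero => omega
          | succ n =>
            have : n + 1 - 1 = n := rfl
            rw [this]
            ring
        omega
      · intro i hi a b hab
        by_cases h : i ≤ k₁
        · rw [hz_lo i h]; exact hsegp i h a b hab
        · rw [hz_hi i (by omega)]
          exact hz'p (i - k₁) (by omega) a b hab
      · intro i hi
        by_cases h : i < k₁
        · have e1 : z i = seg i := hz_lo i (by omega)
          have e2 : z (i + 1) = seg (i + 1) := hz_lo (i + 1) (by omega)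
          rw [e1, e2]
          exact hsegu i h
        · have e1 : z i = z' (i - k₁) := hz_hi i (by omega)
          have e2 : z (i + 1) = z' ((i - k₁) + 1) := by
            have h11 : i - k₁ + 1 = i + 1 - k₁ := by omega
            rw [hz_hi (i + 1) (by omega), h11]
          rw [e1, e2]
          exact hz'u (i - k₁) (by omega)
      · intro i hi w hw
        by_cases h : i ≤ k₁
        · rw [hz_lo i h]; exact hsega i h w hw
        · rw [hz_hi i (by omega)]
          have hx₁w : x₁ w = y w := by rw [hx₁a w hw, hw]
          rw [hz'a (i - k₁) (by omega) w hx₁w, hx₁a w hw]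


end Aux

theorem glauber_path_between_colorings {V : Type} [Fintype V]
    (G : SimpleGraph V) (Δ q : ℕ) [DecidableRel G.Adj]
    (hΔ : ∀ v, G.degree v ≤ Δ) (hq : Δ + 2 ≤ q)
    (x y : V → Fin q)
    (hx : ∀ u v, G.Adj u v → x u ≠ x v) (hy : ∀ u v, G.Adj u v → y u ≠ y v) :
    ∃ (k : ℕ) (z : ℕ → V → Fin q),
      z 0 = x ∧ z k = y ∧
      k ≤ (Finset.univ.filter (fun v => x v ≠ y v)).card * (Δ + 1) ∧
      (∀ i ≤ k, ∀ u v, G.Adj u v → z i u ≠ z i v) ∧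
      (∀ i < k, ∃! v, z i v ≠ z (i + 1) v) ∧
      (∀ i ≤ k, ∀ v, x v = y v → z i v = x v) := by
  exact glauber_main G Δ q hΔ hq y hy _ x hx rfl
end
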